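/- Let (X_j) be a stationary α-mixing sequence with mixing coefficients α(m), γ ∈ (0,1), v_n = inf{x : P(M_n ≤ x) ≥ γ}. If α(r) = O(r^{−β}) for some β > 0, then for every δ < β/(1+β), n^δ·P(X_1 > v_n) → 0 as n → ∞. -/

import Mathlib

open Filter Topology MeasureTheory

/-- The probability of a set, as a real number. -/
noncomputable def pr {Ω : Type*} [MeasurableSpace Ω] (P : Measure Ω) (s : Set Ω) : ℝ :=
  (P s).toReal

/-- `maxOnSeq X a b ω = max_{a ≤ j ≤ b} X_j(ω)` (as a supremum of the finite image). -/
noncomputable def maxOnSeq {Ω : Type*} (X : ℕ → Ω → ℝ) (a b : ℕ) (ω : Ω) : ℝ :=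
  sSup ((fun j => X j ω) '' Set.Icc a b)

/-- `Zfun X m j ω = max {X_m, X_{2m}, …, X_{jm}}(ω)`. -/
noncomputable def Zfun {Ω : Type*} (X : ℕ → Ω → ℝ) (m j : ℕ) (ω : Ω) : ℝ :=
  sSup ((fun i => X (i * m) ω) '' Set.Icc 1 j)

/-- Strict stationarity: all finite-dimensional distributions are shift invariant. -/
def Stationary {Ω : Type*} [MeasurableSpace Ω] (P : Measure Ω) (X : ℕ → Ω → ℝ) : Prop :=
  ∀ s h : ℕ,
    Measure.map (fun ω => fun i : Fin s => X (1 + (i : ℕ) + h) ω) P =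
      Measure.map (fun ω => fun i : Fin s => X (1 + (i : ℕ)) ω) P

/-- The strong (α-) mixing coefficient of the sequence `X` under `P`. -/
noncomputable def alphaMix {Ω : Type*} [MeasurableSpace Ω] (P : Measure Ω)
    (X : ℕ → Ω → ℝ) (r : ℕ) : ℝ :=
  sSup {d : ℝ | ∃ n : ℕ, ∃ A B : Set Ω,
    MeasurableSet[⨆ i ∈ Set.Icc 1 n, MeasurableSpace.comap (X i) inferInstance] A ∧
    MeasurableSet[⨆ i ∈ Set.Ici (n + r), MeasurableSpace.comap (X i) inferInstance] B ∧
    d = |pr P (A ∩ B) - pr P A * pr P B|}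
section Aux
set_option linter.unusedSectionVars false
variable {Ω : Type*} [MeasurableSpace Ω] (P : Measure Ω) [IsProbabilityMeasure P]
  (X : ℕ → Ω → ℝ)

lemma pr_nonneg (s : Set Ω) : 0 ≤ pr P s := ENNReal.toReal_nonneg

lemma pr_mono {s t : Set Ω} (h : s ⊆ t) : pr P s ≤ pr P t :=
  ENNReal.toReal_mono (measure_ne_top P t) (measure_mono h)

lemma pr_le_one (s : Set Ω) : pr P s ≤ 1 := by
  have := pr_mono P (Set.subset_univ s)
  simpa [pr] using this

lemma pr_compl {s : Set Ω} (hs : MeasurableSet s) : pr P sᶜ = 1 - pr P s := by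
  rw [pr, pr, prob_compl_eq_one_sub hs, ENNReal.toReal_sub_of_le prob_le_one ENNReal.one_ne_top]
  simp

lemma ge_pr_iff {s : Set Ω} {a : ℝ} : a ≤ pr P s ↔ ENNReal.ofReal a ≤ P s :=
  (ENNReal.ofReal_le_iff_le_toReal (measure_ne_top P s)).symm

lemma alphaMix_bddAbove (r : ℕ) : BddAbove {d : ℝ | ∃ n : ℕ, ∃ A B : Set Ω,
    MeasurableSet[⨆ i ∈ Set.Icc 1 n, MeasurableSpace.comap (X i) inferInstance] A ∧
    MeasurableSet[⨆ i ∈ Set.Ici (n + r), MeasurableSpace.comap (X i) inferInstance] B ∧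
    d = |pr P (A ∩ B) - pr P A * pr P B|} := by
  refine ⟨1, ?_⟩
  rintro d ⟨n, A, B, -, -, rfl⟩
  have h1 := pr_nonneg P (A ∩ B)
  have h2 := pr_le_one P (A ∩ B)
  have h3 := pr_nonneg P A
  have h4 := pr_le_one P A
  have h5 := pr_nonneg P B
  have h6 := pr_le_one P B
  rw [abs_le]
  constructor <;> nlinarith

lemma alphaMix_mem_le {r : ℕ} {n : ℕ} {A B : Set Ω}
    (hA : MeasurableSet[⨆ i ∈ Set.Icc 1 n, MeasurableSpace.comap (X i) inferInstance] A)
    (hB : MeasurableSet[⨆ i ∈ Set.Ici (n + r), MeasurableSpace.comap (X i) inferInstance] B) :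
    |pr P (A ∩ B) - pr P A * pr P B| ≤ alphaMix P X r :=
  le_csSup (alphaMix_bddAbove P X r) ⟨n, A, B, hA, hB, rfl⟩

lemma alphaMix_nonneg (r : ℕ) : 0 ≤ alphaMix P X r := by
  have := alphaMix_mem_le P X (r := r) (n := 0) (A := ∅) (B := ∅)
    (@MeasurableSet.empty Ω (⨆ i ∈ Set.Icc 1 0, MeasurableSpace.comap (X i) inferInstance))
    (@MeasurableSet.empty Ω (⨆ i ∈ Set.Ici (0 + r), MeasurableSpace.comap (X i) inferInstance))
  simpa [pr] using this

lemma stat_marginal (hmeas : ∀ i, Measurable (X i)) (hstat : Stationary P X) {k : ℕ}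
    (hk : 1 ≤ k) (t : ℝ) :
    pr P {ω | X k ω ≤ t} = pr P {ω | X 1 ω ≤ t} := by
  have hmap := hstat 1 (k - 1)
  have hs : Measurable (fun f : Fin 1 → ℝ => f 0) := measurable_pi_apply 0
  have hset : MeasurableSet {f : Fin 1 → ℝ | f 0 ≤ t} := hs measurableSet_Iic
  have hm1 : Measurable (fun ω => fun i : Fin 1 => X (1 + (i : ℕ) + (k - 1)) ω) :=
    measurable_pi_lambda _ (fun _ => hmeas _)
  have hm2 : Measurable (fun ω => fun i : Fin 1 => X (1 + (i : ℕ)) ω) :=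
    measurable_pi_lambda _ (fun _ => hmeas _)
  have := congrArg (fun μ => μ {f : Fin 1 → ℝ | f 0 ≤ t}) hmap
  simp only [Measure.map_apply hm1 hset, Measure.map_apply hm2 hset] at this
  have e1 : (fun ω => fun i : Fin 1 => X (1 + (i : ℕ) + (k - 1)) ω) ⁻¹' {f | f 0 ≤ t}
      = {ω | X k ω ≤ t} := by
    ext ω
    simp only [Set.mem_preimage, Set.mem_setOf_eq, Fin.val_zero]
    have : 1 + (0 : ℕ) + (k - 1) = k := by omega
    rw [this]
  have e2 : (fun ω => fun i : Fin 1 => X (1 + (i : ℕ)) ω) ⁻¹' {f | f 0 ≤ t}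
      = {ω | X 1 ω ≤ t} := by
    ext ω; simp
  rw [e1, e2] at this
  rw [pr, pr, this]

/-- The block event `⋂_{1 ≤ i ≤ j} {X_{im} ≤ t}`. -/
def Aset (m : ℕ) (t : ℝ) (j : ℕ) : Set Ω := ⋂ i ∈ Set.Icc 1 j, {ω | X (i * m) ω ≤ t}

lemma Aset_zero (m : ℕ) (t : ℝ) : Aset X m t 0 = Set.univ := by
  have : Set.Icc 1 0 = (∅ : Set ℕ) := Set.Icc_eq_empty (by omega)
  simp [Aset, this]

lemma Aset_succ (m : ℕ) (t : ℝ) (j : ℕ) :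
    Aset X m t (j + 1) = Aset X m t j ∩ {ω | X ((j + 1) * m) ω ≤ t} := by
  ext ω
  simp only [Aset, Set.mem_iInter, Set.mem_Icc, Set.mem_inter_iff, Set.mem_setOf_eq]
  constructor
  · intro h
    exact ⟨fun i hi => h i ⟨hi.1, by omega⟩, h (j + 1) ⟨by omega, le_refl _⟩⟩
  · rintro ⟨h1, h2⟩ i hi
    rcases Nat.lt_or_ge i (j + 1) with h | h
    · exact h1 i ⟨hi.1, by omega⟩
    · have : i = j + 1 := by omega
      subst this; exact h2

lemma Aset_subMeasurable (m : ℕ) (hm : 1 ≤ m) (t : ℝ) (j : ℕ) :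
    MeasurableSet[⨆ i ∈ Set.Icc 1 (j * m), MeasurableSpace.comap (X i) inferInstance]
      (Aset X m t j) := by
  refine MeasurableSet.biInter (Set.to_countable _) (fun i hi => ?_)
  have hmem : i * m ∈ Set.Icc 1 (j * m) := by
    simp only [Set.mem_Icc] at hi ⊢
    constructor
    · have := Nat.mul_le_mul hi.1 hm; omega
    · exact Nat.mul_le_mul_right m hi.2
  exact le_iSup₂ (f := fun i (_ : i ∈ Set.Icc 1 (j * m)) =>
      MeasurableSpace.comap (X i) inferInstance) (i * m) hmem
    {ω | X (i * m) ω ≤ t} ⟨Set.Iic t, measurableSet_Iic, rfl⟩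

lemma single_subMeasurable (n k : ℕ) (hk : n ≤ k) (t : ℝ) :
    MeasurableSet[⨆ i ∈ Set.Ici n, MeasurableSpace.comap (X i) inferInstance]
      {ω | X k ω ≤ t} :=
  le_iSup₂ (f := fun i (_ : i ∈ Set.Ici n) => MeasurableSpace.comap (X i) inferInstance)
    k hk {ω | X k ω ≤ t} ⟨Set.Iic t, measurableSet_Iic, rfl⟩

lemma pr_Aset_le (hmeas : ∀ i, Measurable (X i)) (hstat : Stationary P X)
    (m : ℕ) (hm : 1 ≤ m) (t : ℝ) (j : ℕ) :
    pr P (Aset X m t j) ≤ (pr P {ω | X 1 ω ≤ t}) ^ j + j * alphaMix P X m := by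
  set q := pr P {ω | X 1 ω ≤ t} with hq
  have hq0 : 0 ≤ q := pr_nonneg P _
  have hq1 : q ≤ 1 := pr_le_one P _
  have hα0 : 0 ≤ alphaMix P X m := alphaMix_nonneg P X m
  induction j with
  | zero => simp [Aset_zero, pr, measure_univ]
  | succ j ih =>
    have hmix := alphaMix_mem_le P X (r := m) (n := j * m)
      (Aset_subMeasurable X m hm t j)
      (single_subMeasurable X (j * m + m) ((j + 1) * m) (by ring_nf; omega) t)
    have hB : pr P {ω | X ((j + 1) * m) ω ≤ t} = q :=
      stat_marginal P X hmeas hstat (Nat.mul_pos j.succ_pos hm) t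
    have h1 : pr P (Aset X m t (j + 1))
        ≤ pr P (Aset X m t j) * q + alphaMix P X m := by
      rw [Aset_succ]
      have := (abs_le.1 hmix).2
      rw [hB] at this
      linarith
    have hA0 : 0 ≤ pr P (Aset X m t j) := pr_nonneg P _
    calc pr P (Aset X m t (j + 1)) ≤ pr P (Aset X m t j) * q + alphaMix P X m := h1
    _ ≤ (q ^ j + j * alphaMix P X m) * q + alphaMix P X m := by
        exact add_le_add_left (mul_le_mul_of_nonneg_right ih hq0) _
    _ ≤ q ^ (j + 1) + (j + 1 : ℕ) * alphaMix P X m := by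
        rw [pow_succ]
        push_cast
        nlinarith [mul_le_mul_of_nonneg_left hq1 (mul_nonneg (Nat.cast_nonneg j) hα0)]

end Aux
section Aux2
set_option linter.unusedSectionVars false
variable {Ω : Type*} [MeasurableSpace Ω] (P : Measure Ω) [IsProbabilityMeasure P]
  (X : ℕ → Ω → ℝ)

lemma maxOn_event {n : ℕ} (hn : 1 ≤ n) (x : ℝ) :
    {ω : Ω | maxOnSeq X 1 n ω ≤ x} = ⋂ j ∈ Set.Icc 1 n, {ω | X j ω ≤ x} := by
  ext ω
  simp only [maxOnSeq, Set.mem_setOf_eq, Set.mem_iInter]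
  rw [csSup_le_iff (((Set.finite_Icc 1 n).image _).bddAbove)
    ((Set.nonempty_Icc.2 hn).image _)]
  constructor
  · intro h j hj; exact h _ ⟨j, hj, rfl⟩
  · rintro h y ⟨j, hj, rfl⟩; exact h j hj

lemma maxOn_event_measurable (hmeas : ∀ i, Measurable (X i)) {n : ℕ} (hn : 1 ≤ n) (x : ℝ) :
    MeasurableSet {ω : Ω | maxOnSeq X 1 n ω ≤ x} := by
  rw [maxOn_event X hn]
  exact MeasurableSet.biInter (Set.to_countable _)
    (fun j _ => (hmeas j) measurableSet_Iic)

lemma maxOn_event_mono {n : ℕ} {x y : ℝ} (hxy : x ≤ y) :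
    {ω : Ω | maxOnSeq X 1 n ω ≤ x} ⊆ {ω | maxOnSeq X 1 n ω ≤ y} :=
  fun ω h => le_trans h hxy

lemma gamma_le_quantile (hmeas : ∀ i, Measurable (X i))
    {γ : ℝ} (hγ : γ ∈ Set.Ioo (0 : ℝ) 1) {n : ℕ} (hn : 1 ≤ n) :
    γ ≤ pr P {ω | maxOnSeq X 1 n ω ≤ sInf {x | γ ≤ pr P {ω | maxOnSeq X 1 n ω ≤ x}}} := by
  set E : ℝ → Set Ω := fun x => {ω | maxOnSeq X 1 n ω ≤ x} with hE
  set S : Set ℝ := {x | γ ≤ pr P (E x)} with hS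
  have hEmeas : ∀ x, MeasurableSet (E x) := fun x => maxOn_event_measurable X hmeas hn x
  have hEmono : ∀ {x y : ℝ}, x ≤ y → E x ⊆ E y := fun h => maxOn_event_mono X h
  -- S is nonempty
  have hSne : S.Nonempty := by
    have hunion : ⋃ t : ℕ, E (t : ℝ) = Set.univ := by
      ext ω
      simp only [Set.mem_iUnion, Set.mem_univ, iff_true]
      obtain ⟨t, ht⟩ := exists_nat_ge (maxOnSeq X 1 n ω)
      exact ⟨t, ht⟩
    have hmono : Monotone (fun t : ℕ => E (t : ℝ)) := fun a b hab =>
      hEmono (by exact_mod_cast hab)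
    have htend := tendsto_measure_iUnion_atTop (μ := P) hmono
    rw [hunion, measure_univ] at htend
    have hlt : ENNReal.ofReal γ < 1 := ENNReal.ofReal_lt_one.2 hγ.2
    obtain ⟨t, ht⟩ := (htend.eventually (eventually_gt_nhds hlt)).exists
    exact ⟨t, (ge_pr_iff P).2 ht.le⟩
  -- S is bounded below
  have hSbdd : BddBelow S := by
    have hinter : ⋂ t : ℕ, E (-(t : ℝ)) = ∅ := by
      ext ω
      simp only [Set.mem_iInter, Set.mem_empty_iff_false, iff_false, not_forall]
      obtain ⟨t, ht⟩ := exists_nat_gt (-(maxOnSeq X 1 n ω))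
      exact ⟨t, by simp only [hE, Set.mem_setOf_eq, not_le]; linarith⟩
    have hanti : Antitone (fun t : ℕ => E (-(t : ℝ))) := fun a b hab =>
      hEmono (by simp; exact_mod_cast hab)
    have htend := tendsto_measure_iInter_atTop (μ := P)
      (fun t => (hEmeas _).nullMeasurableSet) hanti ⟨0, measure_ne_top _ _⟩
    rw [hinter, measure_empty] at htend
    have hpos : (0 : ENNReal) < ENNReal.ofReal γ := ENNReal.ofReal_pos.2 hγ.1
    obtain ⟨t, ht⟩ := (htend.eventually (eventually_lt_nhds hpos)).exists
    refine ⟨-(t : ℝ), fun x hx => ?_⟩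
    by_contra hcon
    push_neg at hcon
    have : ENNReal.ofReal γ ≤ P (E (-(t : ℝ))) :=
      le_trans ((ge_pr_iff P).1 hx) (measure_mono (hEmono hcon.le))
    exact absurd this (not_le.2 ht)
  -- right continuity at sInf S
  have key : γ ≤ pr P (E (sInf S)) := by
    set D : ℕ → Set Ω := fun t => E (sInf S + 1 / (t + 1)) with hD
    have hanti : Antitone D := fun a b hab => hEmono (by
      have : (1 : ℝ) / (b + 1) ≤ 1 / (a + 1) := by
        apply one_div_le_one_div_of_le <;> [positivity; exact_mod_cast (by omega : a + 1 ≤ b + 1)]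
      linarith)
    have hinter : ⋂ t, D t = E (sInf S) := by
      apply Set.Subset.antisymm
      · intro ω hω
        simp only [Set.mem_iInter] at hω
        show maxOnSeq X 1 n ω ≤ sInf S
        refine le_of_forall_pos_le_add (fun ε hε => ?_)
        obtain ⟨t, ht⟩ := exists_nat_one_div_lt hε
        exact le_trans (hω t) (by push_cast; linarith)
      · intro ω hω
        simp only [Set.mem_iInter]
        exact fun t => hEmono (le_add_of_nonneg_right (by positivity) : sInf S ≤ sInf S + 1 / (t + 1)) hω
    have hlb : ∀ t : ℕ, ENNReal.ofReal γ ≤ P (D t) := by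
      intro t
      have hpos : (0 : ℝ) < 1 / ((t : ℝ) + 1) := by positivity
      obtain ⟨s, hsS, hst⟩ := exists_lt_of_csInf_lt hSne (lt_add_of_pos_right (sInf S) hpos)
      exact le_trans ((ge_pr_iff P).1 hsS) (measure_mono (hEmono hst.le))
    have htend := tendsto_measure_iInter_atTop (μ := P)
      (fun t => (hEmeas _).nullMeasurableSet) hanti ⟨0, measure_ne_top _ _⟩
    rw [hinter] at htend
    exact (ge_pr_iff P).2 (ge_of_tendsto htend (Filter.Eventually.of_forall hlb))
  exact key

end Aux2
set_option maxHeartbeats 1000000 in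
theorem stmt9 {Ω : Type*} [MeasurableSpace Ω] (P : Measure Ω) [IsProbabilityMeasure P]
    (X : ℕ → Ω → ℝ) (hmeas : ∀ i, Measurable (X i)) (hstat : Stationary P X)
    (β : ℝ) (hβ : 0 < β) (c : ℝ)
    (hα : ∀ r : ℕ, 1 ≤ r → alphaMix P X r ≤ c * (r : ℝ) ^ (-β))
    (γ : ℝ) (hγ : γ ∈ Set.Ioo (0 : ℝ) 1) (v : ℕ → ℝ)
    (hv : ∀ n : ℕ, v n = sInf {x | γ ≤ pr P {ω | maxOnSeq X 1 n ω ≤ x}}) :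
    ∀ δ : ℝ, δ < β / (1 + β) →
      Tendsto (fun n : ℕ => (n : ℝ) ^ δ * pr P {ω | v n < X 1 ω}) atTop (𝓝 0) := by
  intro δ hδ
  obtain ⟨hγ0, hγ1⟩ := hγ
  have hβ1 : (0 : ℝ) < 1 + β := by linarith
  set θ : ℝ := (1 / (1 + β) + min 1 (1 - δ)) / 2 with hθdef
  have hδβ : δ * (1 + β) < β := (lt_div_iff₀ hβ1).1 hδ
  have hmin : 1 / (1 + β) < min 1 (1 - δ) := by
    rw [lt_min_iff]
    constructor
    · rw [div_lt_one hβ1]; linarith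
    · rw [div_lt_iff₀ hβ1]; nlinarith
  have hθlow : 1 / (1 + β) < θ := by
    have := min_le_left 1 (1 - δ); rw [hθdef]; linarith
  have hθhigh : θ < min 1 (1 - δ) := by rw [hθdef]; linarith
  have hθ1 : θ < 1 := lt_of_lt_of_le hθhigh (min_le_left _ _)
  have hδθ : δ < 1 - θ := by
    have := lt_of_lt_of_le hθhigh (min_le_right _ _); linarith
  have hθ0 : 0 < θ := lt_trans (by positivity) hθlow
  have hexp : 1 < θ * (1 + β) := (div_lt_iff₀ hβ1).1 hθlow
  have hc0 : 0 ≤ c := by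
    have h := hα 1 le_rfl
    have := alphaMix_nonneg P X 1
    rw [Nat.cast_one, Real.one_rpow] at h
    linarith
  set C : ℝ := Real.log (2 / γ) with hCdef
  have hC0 : 0 ≤ C := Real.log_nonneg (by rw [le_div_iff₀ hγ0]; linarith)
  set m : ℕ → ℕ := fun n => ⌈(n : ℝ) ^ θ⌉₊ with hmdef
  set k : ℕ → ℕ := fun n => n / m n with hkdef
  have ev1 : ∀ᶠ n : ℕ in atTop, 1 ≤ n := eventually_ge_atTop 1
  have ev2 : ∀ᶠ n : ℕ in atTop, (4 : ℝ) ≤ (n : ℝ) ^ (1 - θ) := by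
    have ht : Tendsto (fun n : ℕ => (n : ℝ) ^ (1 - θ)) atTop atTop :=
      (tendsto_rpow_atTop (by linarith)).comp tendsto_natCast_atTop_atTop
    exact ht.eventually_ge_atTop 4
  have ev3 : ∀ᶠ n : ℕ in atTop, c * (n : ℝ) ^ (1 - θ - θ * β) ≤ γ / 2 := by
    have ht : Tendsto (fun n : ℕ => c * (n : ℝ) ^ (1 - θ - θ * β)) atTop (𝓝 (c * 0)) := by
      apply Tendsto.const_mul
      have h2 : Tendsto (fun x : ℝ => x ^ (-(θ * (1 + β) - 1))) atTop (𝓝 0) :=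
        tendsto_rpow_neg_atTop (by linarith)
      have heq : 1 - θ - θ * β = -(θ * (1 + β) - 1) := by ring
      rw [heq]
      exact h2.comp tendsto_natCast_atTop_atTop
    rw [mul_zero] at ht
    exact (ht.eventually_lt_const (by positivity)).mono (fun n h => h.le)
  have key : ∀ᶠ n : ℕ in atTop,
      (n : ℝ) ^ δ * pr P {ω | v n < X 1 ω} ≤ 4 * C * (n : ℝ) ^ (δ + (θ - 1)) := by
    filter_upwards [ev1, ev2, ev3] with n h1n h2n h3n
    have hnR1 : (1 : ℝ) ≤ (n : ℝ) := Nat.one_le_cast.2 h1n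
    have hnpos : (0 : ℝ) < (n : ℝ) := by linarith
    have hnθ1 : (1 : ℝ) ≤ (n : ℝ) ^ θ := Real.one_le_rpow hnR1 hθ0.le
    have hnθpos : (0 : ℝ) < (n : ℝ) ^ θ := by linarith
    have hm1 : 1 ≤ m n := Nat.ceil_pos.2 hnθpos
    have hmlb : (n : ℝ) ^ θ ≤ (m n : ℝ) := Nat.le_ceil _
    have hmub : (m n : ℝ) ≤ 2 * (n : ℝ) ^ θ :=
      le_trans (Nat.ceil_lt_add_one (by positivity)).le (by linarith)
    have hmn : m n ≤ n := by
      rw [hmdef]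
      apply Nat.ceil_le.2
      calc (n : ℝ) ^ θ ≤ (n : ℝ) ^ (1 : ℝ) := Real.rpow_le_rpow_of_exponent_le hnR1 hθ1.le
      _ = (n : ℝ) := Real.rpow_one _
    have hk1 : 1 ≤ k n := (Nat.one_le_div_iff hm1).2 hmn
    have hkmn : k n * m n ≤ n := Nat.div_mul_le_self n (m n)
    have hn1θ : (n : ℝ) ^ ((1 : ℝ) - θ) = (n : ℝ) / (n : ℝ) ^ θ := by
      rw [Real.rpow_sub hnpos, Real.rpow_one]
    have hkub : (k n : ℝ) ≤ (n : ℝ) ^ (1 - θ) := by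
      have h' : (k n : ℝ) * (m n : ℝ) ≤ (n : ℝ) := by exact_mod_cast hkmn
      rw [hn1θ, le_div_iff₀ hnθpos]
      nlinarith [mul_le_mul_of_nonneg_left hmlb (Nat.cast_nonneg (k n))]
    have hklb : (n : ℝ) ^ (1 - θ) / 4 ≤ (k n : ℝ) := by
      have h' : n < m n * (k n + 1) := Nat.lt_mul_div_succ n (by omega)
      have h'' : (n : ℝ) < (m n : ℝ) * ((k n : ℝ) + 1) := by exact_mod_cast h'
      have h3 : (n : ℝ) < 2 * (n : ℝ) ^ θ * ((k n : ℝ) + 1) := by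
        have := mul_le_mul_of_nonneg_right hmub (by positivity : (0:ℝ) ≤ (k n : ℝ) + 1)
        linarith
      have h4 : (n : ℝ) ^ (1 - θ) / 2 < (k n : ℝ) + 1 := by
        rw [hn1θ, div_div, div_lt_iff₀ (by positivity)]
        calc (n : ℝ) < 2 * (n : ℝ) ^ θ * ((k n : ℝ) + 1) := h3
        _ = ((k n : ℝ) + 1) * ((n : ℝ) ^ θ * 2) := by ring
      linarith
    have hkpos : (0 : ℝ) < (k n : ℝ) := by linarith
    have hαb : alphaMix P X (m n) ≤ c * (n : ℝ) ^ (-(θ * β)) := by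
      calc alphaMix P X (m n) ≤ c * (m n : ℝ) ^ (-β) := hα (m n) hm1
      _ ≤ c * ((n : ℝ) ^ θ) ^ (-β) := by
          apply mul_le_mul_of_nonneg_left _ hc0
          exact Real.rpow_le_rpow_of_nonpos hnθpos hmlb (by linarith)
      _ = c * (n : ℝ) ^ (-(θ * β)) := by
          rw [← Real.rpow_mul hnpos.le]
          ring_nf
    have hkα : (k n : ℝ) * alphaMix P X (m n) ≤ γ / 2 := by
      have step : (k n : ℝ) * alphaMix P X (m n)
          ≤ (n : ℝ) ^ (1 - θ) * (c * (n : ℝ) ^ (-(θ * β))) :=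
        mul_le_mul hkub hαb (alphaMix_nonneg P X _) (by positivity)
      have heq2 : (n : ℝ) ^ (1 - θ) * (c * (n : ℝ) ^ (-(θ * β)))
          = c * (n : ℝ) ^ (1 - θ - θ * β) := by
        rw [show (1 : ℝ) - θ - θ * β = (1 - θ) + (-(θ * β)) by ring, Real.rpow_add hnpos]
        ring
      rw [heq2] at step
      linarith
    have hsub : {ω : Ω | maxOnSeq X 1 n ω ≤ v n} ⊆ Aset X (m n) (v n) (k n) := by
      rw [maxOn_event X h1n]
      intro ω hω
      simp only [Set.mem_iInter, Set.mem_Icc, Set.mem_setOf_eq] at hω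
      simp only [Aset, Set.mem_iInter, Set.mem_Icc, Set.mem_setOf_eq]
      intro i hi
      refine hω (i * m n) ⟨?_, ?_⟩
      · calc 1 = 1 * 1 := by omega
        _ ≤ i * m n := Nat.mul_le_mul hi.1 hm1
      · calc i * m n ≤ k n * m n := Nat.mul_le_mul_right _ hi.2
        _ ≤ n := hkmn
    have hγA : γ ≤ pr P (Aset X (m n) (v n) (k n)) := by
      have h0 : γ ≤ pr P {ω | maxOnSeq X 1 n ω ≤ v n} := by
        rw [hv n]; exact gamma_le_quantile P X hmeas ⟨hγ0, hγ1⟩ h1n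
      exact le_trans h0 (pr_mono P hsub)
    set q := pr P {ω | X 1 ω ≤ v n} with hqdef
    have hqk : γ / 2 ≤ q ^ (k n) := by
      have := pr_Aset_le P X hmeas hstat (m n) hm1 (v n) (k n)
      linarith
    have hq1 : q ≤ 1 := pr_le_one P _
    have hqpos : 0 < q := by
      by_contra hcon
      push_neg at hcon
      have hq0' : q = 0 := le_antisymm hcon (pr_nonneg P _)
      rw [hq0', zero_pow (by omega : k n ≠ 0)] at hqk
      linarith
    have hlog1 : Real.log q ≤ q - 1 := Real.log_le_sub_one_of_pos hqpos
    have hlog2 : Real.log (γ / 2) ≤ (k n : ℝ) * Real.log q := by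
      have := Real.log_le_log (half_pos hγ0) hqk
      rwa [Real.log_pow] at this
    have hCγ : C = -Real.log (γ / 2) := by rw [hCdef, ← Real.log_inv, inv_div]
    have hkp : (k n : ℝ) * (1 - q) ≤ C := by
      have h5 : (k n : ℝ) * (1 - q) ≤ (k n : ℝ) * (-Real.log q) :=
        mul_le_mul_of_nonneg_left (by linarith) hkpos.le
      rw [hCγ]
      nlinarith
    have hpval : pr P {ω | v n < X 1 ω} = 1 - q := by
      have hpset : {ω : Ω | v n < X 1 ω} = {ω : Ω | X 1 ω ≤ v n}ᶜ := by
        ext ω; simp [not_le]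
      rw [hpset, pr_compl P (show MeasurableSet {ω : Ω | X 1 ω ≤ v n} from (hmeas 1) measurableSet_Iic)]
    have hple : pr P {ω | v n < X 1 ω} ≤ 4 * C * (n : ℝ) ^ (θ - 1) := by
      rw [hpval]
      have hq1' : (0 : ℝ) ≤ 1 - q := by linarith
      have h6 : (1 - q) * (n : ℝ) ^ (1 - θ) ≤ 4 * C := by
        nlinarith [mul_le_mul_of_nonneg_left hklb hq1']
      have h8 : (n : ℝ) ^ (θ - 1) = ((n : ℝ) ^ (1 - θ))⁻¹ := by
        rw [← Real.rpow_neg hnpos.le]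
        ring_nf
      have hx : (0 : ℝ) < (n : ℝ) ^ (1 - θ) := by positivity
      rw [h8, ← div_eq_mul_inv, le_div_iff₀ hx]
      linarith
    calc (n : ℝ) ^ δ * pr P {ω | v n < X 1 ω}
        ≤ (n : ℝ) ^ δ * (4 * C * (n : ℝ) ^ (θ - 1)) :=
          mul_le_mul_of_nonneg_left hple (by positivity)
    _ = 4 * C * (n : ℝ) ^ (δ + (θ - 1)) := by
        rw [Real.rpow_add hnpos]; ring
  have hlim : Tendsto (fun n : ℕ => 4 * C * (n : ℝ) ^ (δ + (θ - 1))) atTop (𝓝 0) := by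
    have ht : Tendsto (fun x : ℝ => x ^ (-(1 - θ - δ))) atTop (𝓝 0) :=
      tendsto_rpow_neg_atTop (by linarith)
    have heq : δ + (θ - 1) = -(1 - θ - δ) := by ring
    rw [heq]
    have h2 := (ht.comp tendsto_natCast_atTop_atTop).const_mul (4 * C)
    simpa using h2
  have hlow : ∀ᶠ n : ℕ in atTop, (0 : ℝ) ≤ (n : ℝ) ^ δ * pr P {ω | v n < X 1 ω} :=
    Filter.Eventually.of_forall
      (fun n => mul_nonneg (Real.rpow_nonneg (Nat.cast_nonneg n) δ) (pr_nonneg P _))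
  exact tendsto_of_tendsto_of_tendsto_of_le_of_le' tendsto_const_nhds hlim hlow key
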